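/- arXiv:2106.05454 — 2 statements merged into one kernel-verified Lean document; each statement's English description precedes it below -/
import Mathlib

section
/- (Deterministic form of Lemma 1.) If conditions A and B both hold, then every global minimizer β̃̂ of the gEN criterion L over ℝ^p satisfies sign(Σ^{-1/2}β̃̂) = sign(β*) componentwise. -/
open Matrix

/-- squared Euclidean norm -/
noncomputable def norm2sq {m : ℕ} (v : Fin m → ℝ) : ℝ := ∑ i, (v i) ^ 2

/-- ℓ¹ norm -/
noncomputable def norm1 {m : ℕ} (v : Fin m → ℝ) : ℝ := ∑ i, |v i|

/-- sign function -/
noncomputable def sgn (x : ℝ) : ℝ := if 0 < x then 1 else if x < 0 then -1 else 0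

lemma sgn_mul_self (x : ℝ) : sgn x * x = |x| := by
  unfold sgn
  rcases lt_trichotomy x 0 with h | h | h
  · rw [if_neg (by linarith), if_pos h, abs_of_neg h]; ring
  · simp [h]
  · rw [if_pos h, abs_of_pos h]; ring

lemma abs_sgn_le (x : ℝ) : |sgn x| ≤ 1 := by
  unfold sgn
  split_ifs <;> simp

lemma sgn_add_of_abs_lt {a u : ℝ} (h : |u| < |a|) : sgn (a + u) = sgn a := by
  rw [abs_lt] at h
  rcases lt_trichotomy a 0 with ha | ha | ha
  · rw [abs_of_neg ha] at h
    unfold sgn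
    rw [if_neg (by linarith), if_pos (by linarith), if_neg (by linarith), if_pos ha]
  · simp [ha, abs_of_nonneg (le_refl (0:ℝ))] at h
    exact absurd h.1 (by linarith [abs_nonneg u, h.2])
  · rw [abs_of_pos ha] at h
    unfold sgn
    rw [if_pos (by linarith), if_pos ha]

lemma split_sum {p q : ℕ} (hqp : q ≤ p) (hpq : q + (p - q) = p) (f : Fin p → ℝ) :
    ∑ j, f j = ∑ j : Fin q, f (Fin.castLE hqp j)
      + ∑ j : Fin (p - q), f (Fin.cast hpq (Fin.natAdd q j)) := by
  rw [← (Fintype.sum_equiv (finCongr hpq) (fun i => f (Fin.cast hpq i)) f (fun i => rfl)),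
    Fin.sum_univ_add]
  congr 1

set_option maxHeartbeats 1000000 in
/-- Deterministic form of Lemma 1: if conditions A and B hold, then every global
    minimizer β̃̂ of the gEN criterion L satisfies sign(Σ^{-1/2}β̃̂) = sign(β*)
    componentwise. -/
theorem stmt7 (n p q : ℕ) (hn : 1 ≤ n) (hq : 1 ≤ q) (hqp : q ≤ p)
    (X : Matrix (Fin n) (Fin p) ℝ) (eps : Fin n → ℝ)
    (betastar : Fin p → ℝ)
    (hbeta1 : ∀ j : Fin p, (j : ℕ) < q → betastar j ≠ 0)
    (hbeta2 : ∀ j : Fin p, q ≤ (j : ℕ) → betastar j = 0)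
    (y : Fin n → ℝ) (hy : y = X.mulVec betastar + eps)
    (Sig : Matrix (Fin p) (Fin p) ℝ) (hSig : Sig.PosDef)
    -- R is the symmetric positive definite square root Σ^{1/2}, so Σ^{-1/2} = R⁻¹
    (R : Matrix (Fin p) (Fin p) ℝ) (hR : R.PosDef) (hRR : R * R = Sig)
    (lam eta : ℝ) (hlam : 0 < lam) (heta : 0 < eta)
    (L : (Fin p → ℝ) → ℝ)
    (hL : ∀ bt, L bt =
      norm2sq (fun i => y i - X.mulVec (R⁻¹.mulVec bt) i)
        + lam * norm1 (R⁻¹.mulVec bt) + eta * norm2sq bt)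
    (X1 : Matrix (Fin n) (Fin q) ℝ) (hX1 : X1 = X.submatrix id (Fin.castLE hqp))
    (X2 : Matrix (Fin n) (Fin (p - q)) ℝ)
    (hX2 : X2 = X.submatrix id
      (fun j => Fin.cast (by omega : q + (p - q) = p) (Fin.natAdd q j)))
    (Sig11 : Matrix (Fin q) (Fin q) ℝ)
    (hSig11 : Sig11 = Sig.submatrix (Fin.castLE hqp) (Fin.castLE hqp))
    (Sig21 : Matrix (Fin (p - q)) (Fin q) ℝ)
    (hSig21 : Sig21 = Sig.submatrix
      (fun j => Fin.cast (by omega : q + (p - q) = p) (Fin.natAdd q j)) (Fin.castLE hqp))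
    (beta1 : Fin q → ℝ) (hbeta1q : beta1 = fun j => betastar (Fin.castLE hqp j))
    (C11 : Matrix (Fin q) (Fin q) ℝ) (hC11 : C11 = ((n : ℝ)⁻¹) • (X1ᵀ * X1))
    (C21 : Matrix (Fin (p - q)) (Fin q) ℝ) (hC21 : C21 = ((n : ℝ)⁻¹) • (X2ᵀ * X1))
    (W1 : Fin q → ℝ) (hW1 : W1 = ((Real.sqrt n)⁻¹) • X1ᵀ.mulVec eps)
    (W2 : Fin (p - q) → ℝ) (hW2 : W2 = ((Real.sqrt n)⁻¹) • X2ᵀ.mulVec eps)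
    (CC11 : Matrix (Fin q) (Fin q) ℝ) (hCC11 : CC11 = C11 + (eta / n) • Sig11)
    (CC21 : Matrix (Fin (p - q)) (Fin q) ℝ) (hCC21 : CC21 = C21 + (eta / n) • Sig21)
    -- condition A
    (hA : ∀ j : Fin q,
      |CC11⁻¹.mulVec W1 j| < Real.sqrt n *
        (|beta1 j| - (lam / (2 * n)) * |(CC11⁻¹.mulVec fun k => sgn (beta1 k)) j|
          - (eta / n) * |CC11⁻¹.mulVec (Sig11.mulVec beta1) j|))
    -- condition B
    (hB : ∀ j : Fin (p - q),
      |(CC21 * CC11⁻¹).mulVec W1 j - W2 j| ≤ lam / (2 * Real.sqrt n)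
        - (lam / (2 * Real.sqrt n)) *
          |((CC21 * CC11⁻¹).mulVec
              ((fun k => sgn (beta1 k)) + (2 * eta / lam) • Sig11.mulVec beta1)
            - (2 * eta / lam) • Sig21.mulVec beta1) j|)
    -- β̃̂ is a global minimizer of L
    (bthat : Fin p → ℝ) (hmin : ∀ b : Fin p → ℝ, L bthat ≤ L b) :
    ∀ j : Fin p, sgn (R⁻¹.mulVec bthat j) = sgn (betastar j) := by
  -- basic numeric facts
  have hn0 : (0:ℝ) < n := by exact_mod_cast hn
  have hn0' : (n:ℝ) ≠ 0 := ne_of_gt hn0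
  have hsn : 0 < Real.sqrt n := Real.sqrt_pos.mpr hn0
  have hsn' : Real.sqrt n ≠ 0 := ne_of_gt hsn
  have hsq : Real.sqrt n * Real.sqrt n = n := Real.mul_self_sqrt (le_of_lt hn0)
  have hpq : q + (p - q) = p := by omega
  set e1 : Fin q → Fin p := Fin.castLE hqp with he1
  set e2 : Fin (p - q) → Fin p := fun j => Fin.cast hpq (Fin.natAdd q j) with he2
  have he1v : ∀ k : Fin q, ((e1 k : Fin p) : ℕ) = (k : ℕ) := fun k => rfl
  have he2v : ∀ k : Fin (p - q), ((e2 k : Fin p) : ℕ) = q + (k : ℕ) := fun k => rfl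
  have hsplit : ∀ f : Fin p → ℝ,
      ∑ j, f j = ∑ j : Fin q, f (e1 j) + ∑ j : Fin (p - q), f (e2 j) :=
    fun f => split_sum hqp hpq f
  -- symmetry facts
  have hSigT : Sigᵀ = Sig := hSig.isHermitian.eq
  have hRT : Rᵀ = R := hR.isHermitian.eq
  have hSymm : ∀ v w : Fin p → ℝ, v ⬝ᵥ Sig.mulVec w = w ⬝ᵥ Sig.mulVec v := by
    intro v w
    rw [dotProduct_mulVec, ← mulVec_transpose, hSigT, dotProduct_comm]
  -- invertibility of R
  have hRdet : IsUnit R.det := isUnit_iff_ne_zero.mpr (ne_of_gt hR.det_pos)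
  have hRinv1 : R * R⁻¹ = 1 := mul_nonsing_inv R hRdet
  have hRinv2 : R⁻¹ * R = 1 := nonsing_inv_mul R hRdet
  -- objective in β coordinates
  set F : (Fin p → ℝ) → ℝ := fun b =>
    (y - X.mulVec b) ⬝ᵥ (y - X.mulVec b) + lam * (∑ j, |b j|)
      + eta * (b ⬝ᵥ Sig.mulVec b) with hFdef
  have hquad : ∀ v : Fin p → ℝ, v ⬝ᵥ Sig.mulVec v = (R.mulVec v) ⬝ᵥ (R.mulVec v) := by
    intro v
    rw [← hRR, ← mulVec_mulVec, dotProduct_mulVec, ← mulVec_transpose, hRT]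
  have hLF : ∀ bt, L bt = F (R⁻¹.mulVec bt) := by
    intro bt
    have h1 : R.mulVec (R⁻¹.mulVec bt) = bt := by
      rw [mulVec_mulVec, hRinv1, one_mulVec]
    have h2 : (R⁻¹.mulVec bt) ⬝ᵥ Sig.mulVec (R⁻¹.mulVec bt) = ∑ i, bt i ^ 2 := by
      rw [hquad, h1]; simp [dotProduct, sq]
    have h3 : (y - X.mulVec (R⁻¹.mulVec bt)) ⬝ᵥ (y - X.mulVec (R⁻¹.mulVec bt))
        = ∑ i, (y i - X.mulVec (R⁻¹.mulVec bt) i) ^ 2 := by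
      simp [dotProduct, Pi.sub_apply, sq]
    rw [hL bt]
    simp only [hFdef]
    rw [h2, h3]
    simp only [norm2sq, norm1]
  -- the minimizer in β coordinates
  set a : Fin p → ℝ := R⁻¹.mulVec bthat with ha
  have hFa : ∀ b, F a ≤ F b := by
    intro b
    have := hmin (R.mulVec b)
    rw [hLF, hLF] at this
    have hb : R⁻¹.mulVec (R.mulVec b) = b := by
      rw [mulVec_mulVec, hRinv2, one_mulVec]
    rwa [hb] at this
  -- sign vector
  set s : Fin q → ℝ := fun k => sgn (beta1 k) with hs
  -- CC11 is positive definite, hence invertible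
  have hSig11sym : Sig11ᵀ = Sig11 := by
    rw [hSig11, transpose_submatrix, hSigT]
  have hCCsym : CC11ᵀ = CC11 := by
    rw [hCC11, transpose_add, transpose_smul, hSig11sym, hC11, transpose_smul,
      transpose_mul, transpose_transpose]
  have hCCpos : ∀ x : Fin q → ℝ, x ≠ 0 → 0 < x ⬝ᵥ CC11.mulVec x := by
    intro x hx
    have h1 : x ⬝ᵥ CC11.mulVec x
        = (n:ℝ)⁻¹ * ((X1.mulVec x) ⬝ᵥ (X1.mulVec x)) + (eta / n) * (x ⬝ᵥ Sig11.mulVec x) := by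
      rw [hCC11, add_mulVec, dotProduct_add, hC11, smul_mulVec, smul_mulVec,
        dotProduct_smul, dotProduct_smul, smul_eq_mul, smul_eq_mul, ← mulVec_mulVec,
        dotProduct_mulVec, ← mulVec_transpose, transpose_transpose]
    -- zero-extension of x
    set xt : Fin p → ℝ := fun j => if h : (j : ℕ) < q then x ⟨j, h⟩ else 0 with hxt
    have hxte1 : ∀ k : Fin q, xt (e1 k) = x k := by
      intro k
      simp only [hxt]
      exact dif_pos k.isLt
    have hxte2 : ∀ k : Fin (p - q), xt (e2 k) = 0 := by
      intro k
      simp only [hxt]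
      exact dif_neg (by rw [he2v k]; omega)
    have h2 : x ⬝ᵥ Sig11.mulVec x = xt ⬝ᵥ Sig.mulVec xt := by
      have hinner : ∀ k : Fin q, (Sig.mulVec xt) (e1 k) = (Sig11.mulVec x) k := by
        intro k
        show ∑ j, Sig (e1 k) j * xt j = ∑ m, Sig11 k m * x m
        rw [hsplit (fun j => Sig (e1 k) j * xt j)]
        have hz2 : ∀ m : Fin (p - q), Sig (e1 k) (e2 m) * xt (e2 m) = 0 := by
          intro m; rw [hxte2]; ring
        rw [Finset.sum_congr rfl (fun m _ => hz2 m), Finset.sum_const_zero, add_zero]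
        apply Finset.sum_congr rfl
        intro m _
        rw [hxte1, hSig11]
        rfl
      show ∑ k, x k * (Sig11.mulVec x) k = ∑ j, xt j * (Sig.mulVec xt) j
      rw [hsplit (fun j => xt j * (Sig.mulVec xt) j)]
      have hz3 : ∀ k : Fin (p - q), xt (e2 k) * (Sig.mulVec xt) (e2 k) = 0 := by
        intro k; rw [hxte2]; ring
      rw [Finset.sum_congr rfl (fun k _ => hz3 k), Finset.sum_const_zero, add_zero]
      apply Finset.sum_congr rfl
      intro k _
      rw [hxte1, hinner]
    have hxt0 : xt ≠ 0 := by
      intro h0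
      apply hx
      funext k
      have := congrFun h0 (e1 k)
      rw [hxte1] at this
      exact this
    have h3 : 0 < xt ⬝ᵥ Sig.mulVec xt := by
      have := hSig.dotProduct_mulVec_pos hxt0
      simpa using this
    have h4 : 0 ≤ (X1.mulVec x) ⬝ᵥ (X1.mulVec x) := by
      simp only [dotProduct]
      exact Finset.sum_nonneg fun i _ => mul_self_nonneg _
    rw [h1, ← h2] at *
    have h5 : 0 < (eta / n) * (x ⬝ᵥ Sig11.mulVec x) := by
      apply mul_pos (div_pos heta hn0)
      rw [h2]; exact h3
    have h6 : 0 ≤ (n:ℝ)⁻¹ * ((X1.mulVec x) ⬝ᵥ (X1.mulVec x)) :=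
      mul_nonneg (le_of_lt (inv_pos.mpr hn0)) h4
    linarith
  have hCCpd : CC11.PosDef := by
    refine PosDef.of_dotProduct_mulVec_pos ?_ ?_
    · show CC11ᴴ = CC11
      rw [conjTranspose_eq_transpose_of_trivial, hCCsym]
    · intro x hx
      have := hCCpos x hx
      simpa using this
  have hCCdet : IsUnit CC11.det := isUnit_iff_ne_zero.mpr (ne_of_gt hCCpd.det_pos)
  have hCCinv1 : CC11 * CC11⁻¹ = 1 := mul_nonsing_inv CC11 hCCdet
  -- candidate solution
  set z : Fin q → ℝ := (Real.sqrt n)⁻¹ • W1 - (lam / (2 * n)) • s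
      - (eta / n) • Sig11.mulVec beta1 with hz
  set u : Fin q → ℝ := CC11⁻¹.mulVec z with hu
  have hCCu : CC11.mulVec u = z := by
    rw [hu, mulVec_mulVec, hCCinv1, one_mulVec]
  set bh1 : Fin q → ℝ := fun k => beta1 k + u k with hbh1def
  set bh : Fin p → ℝ := fun j => if h : (j : ℕ) < q then bh1 ⟨j, h⟩ else 0 with hbh
  have hbhe1 : ∀ k : Fin q, bh (e1 k) = bh1 k := by
    intro k
    simp only [hbh]
    exact dif_pos k.isLt
  have hbhe2 : ∀ k : Fin (p - q), bh (e2 k) = 0 := by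
    intro k
    simp only [hbh]
    exact dif_neg (by rw [he2v k]; omega)
  -- condition A gives |u k| < |beta1 k|
  have hukey : ∀ k : Fin q, |u k| < |beta1 k| := by
    intro k
    have hu2 : u k = (Real.sqrt n)⁻¹ * (CC11⁻¹.mulVec W1 k)
        - (lam / (2 * n)) * (CC11⁻¹.mulVec s k)
        - (eta / n) * (CC11⁻¹.mulVec (Sig11.mulVec beta1) k) := by
      rw [hu, hz, mulVec_sub, mulVec_sub, mulVec_smul, mulVec_smul, mulVec_smul]
      simp [Pi.sub_apply]
    have h1 := hA k
    rw [hs] at *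
    have htri : |u k| ≤ (Real.sqrt n)⁻¹ * |CC11⁻¹.mulVec W1 k|
        + (lam / (2 * n)) * |CC11⁻¹.mulVec (fun k => sgn (beta1 k)) k|
        + (eta / n) * |CC11⁻¹.mulVec (Sig11.mulVec beta1) k| := by
      rw [hu2]
      have e1' : |(Real.sqrt n)⁻¹ * (CC11⁻¹.mulVec W1 k)|
          = (Real.sqrt n)⁻¹ * |CC11⁻¹.mulVec W1 k| := by
        rw [abs_mul, abs_of_pos (inv_pos.mpr hsn)]
      have e2' : |(lam / (2 * n)) * (CC11⁻¹.mulVec (fun k => sgn (beta1 k)) k)|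
          = (lam / (2 * n)) * |CC11⁻¹.mulVec (fun k => sgn (beta1 k)) k| := by
        rw [abs_mul, abs_of_pos (by positivity)]
      have e3' : |(eta / n) * (CC11⁻¹.mulVec (Sig11.mulVec beta1) k)|
          = (eta / n) * |CC11⁻¹.mulVec (Sig11.mulVec beta1) k| := by
        rw [abs_mul, abs_of_pos (by positivity)]
      calc |(Real.sqrt n)⁻¹ * (CC11⁻¹.mulVec W1 k)
            - (lam / (2 * n)) * (CC11⁻¹.mulVec (fun k => sgn (beta1 k)) k)
            - (eta / n) * (CC11⁻¹.mulVec (Sig11.mulVec beta1) k)|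
          ≤ |(Real.sqrt n)⁻¹ * (CC11⁻¹.mulVec W1 k)|
            + |(lam / (2 * n)) * (CC11⁻¹.mulVec (fun k => sgn (beta1 k)) k)|
            + |(eta / n) * (CC11⁻¹.mulVec (Sig11.mulVec beta1) k)| := by
              have := abs_sub (( Real.sqrt n)⁻¹ * (CC11⁻¹.mulVec W1 k)
                - (lam / (2 * n)) * (CC11⁻¹.mulVec (fun k => sgn (beta1 k)) k))
                ((eta / n) * (CC11⁻¹.mulVec (Sig11.mulVec beta1) k))
              have h2 := abs_sub ((Real.sqrt n)⁻¹ * (CC11⁻¹.mulVec W1 k))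
                ((lam / (2 * n)) * (CC11⁻¹.mulVec (fun k => sgn (beta1 k)) k))
              linarith
        _ = _ := by rw [e1', e2', e3']
    have hmul : (Real.sqrt n)⁻¹ * |CC11⁻¹.mulVec W1 k|
        < |beta1 k| - (lam / (2 * n)) * |CC11⁻¹.mulVec (fun k => sgn (beta1 k)) k|
          - (eta / n) * |CC11⁻¹.mulVec (Sig11.mulVec beta1) k| := by
      have := mul_lt_mul_of_pos_left h1 (inv_pos.mpr hsn)
      rwa [← mul_assoc, inv_mul_cancel₀ hsn', one_mul] at this
    linarith
  have hbeta1ne : ∀ k : Fin q, beta1 k ≠ 0 := by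
    intro k
    rw [hbeta1q]
    exact hbeta1 (Fin.castLE hqp k) k.isLt
  have hsgnbh1 : ∀ k : Fin q, sgn (bh1 k) = sgn (beta1 k) :=
    fun k => sgn_add_of_abs_lt (hukey k)
  -- structural facts about X, y, Sig restricted
  have hXbh : X.mulVec bh = X1.mulVec bh1 := by
    funext i
    show ∑ j, X i j * bh j = _
    rw [hsplit (fun j => X i j * bh j)]
    have hz2 : ∀ k : Fin (p - q), X i (e2 k) * bh (e2 k) = 0 := by
      intro k; rw [hbhe2]; ring
    rw [Finset.sum_congr rfl (fun k _ => hz2 k), Finset.sum_const_zero, add_zero]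
    apply Finset.sum_congr rfl
    intro k _
    rw [hbhe1, hX1]
    rfl
  have hymain : y = X1.mulVec beta1 + eps := by
    rw [hy]
    congr 1
    funext i
    show ∑ j, X i j * betastar j = _
    rw [hsplit (fun j => X i j * betastar j)]
    have hz2 : ∀ k : Fin (p - q), X i (e2 k) * betastar (e2 k) = 0 := by
      intro k
      rw [hbeta2 (e2 k) (by rw [he2v]; omega)]
      ring
    rw [Finset.sum_congr rfl (fun k _ => hz2 k), Finset.sum_const_zero, add_zero]
    apply Finset.sum_congr rfl
    intro k _
    rw [hbeta1q, hX1]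
    rfl
  have hres : X.mulVec bh - y = X1.mulVec u - eps := by
    rw [hXbh, hymain]
    have : bh1 = beta1 + u := by funext k; rw [hbh1def]; rfl
    rw [this, mulVec_add]
    funext i
    simp only [Pi.add_apply, Pi.sub_apply]
    ring
  have hSigbh1 : ∀ k : Fin q, (Sig.mulVec bh) (e1 k) = (Sig11.mulVec bh1) k := by
    intro k
    show ∑ j, Sig (e1 k) j * bh j = _
    rw [hsplit (fun j => Sig (e1 k) j * bh j)]
    have hz2 : ∀ m : Fin (p - q), Sig (e1 k) (e2 m) * bh (e2 m) = 0 := by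
      intro m; rw [hbhe2]; ring
    rw [Finset.sum_congr rfl (fun m _ => hz2 m), Finset.sum_const_zero, add_zero]
    apply Finset.sum_congr rfl
    intro m _
    rw [hbhe1, hSig11]
    rfl
  have hSigbh2 : ∀ k : Fin (p - q), (Sig.mulVec bh) (e2 k) = (Sig21.mulVec bh1) k := by
    intro k
    show ∑ j, Sig (e2 k) j * bh j = _
    rw [hsplit (fun j => Sig (e2 k) j * bh j)]
    have hz2 : ∀ m : Fin (p - q), Sig (e2 k) (e2 m) * bh (e2 m) = 0 := by
      intro m; rw [hbhe2]; ring
    rw [Finset.sum_congr rfl (fun m _ => hz2 m), Finset.sum_const_zero, add_zero]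
    apply Finset.sum_congr rfl
    intro m _
    rw [hbhe1, hSig21]
    rfl
  have hXte1 : ∀ (v : Fin n → ℝ) (k : Fin q), (Xᵀ.mulVec v) (e1 k) = (X1ᵀ.mulVec v) k := by
    intro v k
    show ∑ i, Xᵀ (e1 k) i * v i = ∑ i, X1ᵀ k i * v i
    apply Finset.sum_congr rfl
    intro i _
    rw [hX1]
    rfl
  have hXte2 : ∀ (v : Fin n → ℝ) (k : Fin (p - q)),
      (Xᵀ.mulVec v) (e2 k) = (X2ᵀ.mulVec v) k := by
    intro v k
    show ∑ i, Xᵀ (e2 k) i * v i = ∑ i, X2ᵀ k i * v i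
    apply Finset.sum_congr rfl
    intro i _
    rw [hX2]
    rfl
  -- gradient of the smooth part
  set G : Fin p → ℝ := fun j =>
    2 * (Xᵀ.mulVec (X.mulVec bh - y)) j + 2 * eta * (Sig.mulVec bh) j with hG
  -- matrix-scaling identities
  have hX1X1 : X1ᵀ * X1 = (n:ℝ) • C11 := by
    rw [hC11, smul_smul, mul_inv_cancel₀ hn0', one_smul]
  have hX1eps : X1ᵀ.mulVec eps = Real.sqrt n • W1 := by
    rw [hW1, smul_smul, mul_inv_cancel₀ hsn', one_smul]
  have hX2eps : X2ᵀ.mulVec eps = Real.sqrt n • W2 := by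
    rw [hW2, smul_smul, mul_inv_cancel₀ hsn', one_smul]
  -- KKT stationarity on the support
  have kkt1 : ∀ k : Fin q, G (e1 k) = -(lam * s k) := by
    intro k
    rw [hG]
    show 2 * (Xᵀ.mulVec (X.mulVec bh - y)) (e1 k) + 2 * eta * (Sig.mulVec bh) (e1 k) = _
    rw [hXte1, hSigbh1, hres]
    have h1 : (X1ᵀ.mulVec (X1.mulVec u - eps)) k
        = (n:ℝ) * (C11.mulVec u) k - Real.sqrt n * W1 k := by
      rw [mulVec_sub, mulVec_mulVec, hX1X1, smul_mulVec, hX1eps]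
      simp [Pi.sub_apply, Pi.smul_apply, smul_eq_mul]
    have h2 : (Sig11.mulVec bh1) k = (Sig11.mulVec beta1) k + (Sig11.mulVec u) k := by
      have : bh1 = beta1 + u := by funext m; rw [hbh1def]; rfl
      rw [this, mulVec_add]; rfl
    rw [h1, h2]
    -- use CC11 u = z
    have h3 : (C11.mulVec u) k + (eta / n) * (Sig11.mulVec u) k = z k := by
      have h00 := congrFun hCCu k
      rw [hCC11, add_mulVec, smul_mulVec] at h00
      simp only [Pi.add_apply, Pi.smul_apply, smul_eq_mul] at h00
      linarith [h00]
    have h4 : z k = (Real.sqrt n)⁻¹ * W1 k - lam / (2 * n) * s k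
        - eta / n * (Sig11.mulVec beta1) k := by
      rw [hz]; simp [Pi.sub_apply, Pi.smul_apply, smul_eq_mul]
    have h5 : (C11.mulVec u) k = z k - (eta / n) * (Sig11.mulVec u) k := by linarith
    rw [h5, h4]
    have hfact1 : (n:ℝ) * (Real.sqrt n)⁻¹ = Real.sqrt n := by
      field_simp
      try linarith [hsq]
    have hfact2 : (n:ℝ) * (lam / (2 * n)) = lam / 2 := by
      field_simp
      try ring
    have hfact3 : (n:ℝ) * (eta / n) = eta := by
      field_simp
      try ring
    linear_combination (2 * W1 k) * hfact1 - (2 * s k) * hfact2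
      - (2 * (Sig11.mulVec beta1) k) * hfact3 - (2 * (Sig11.mulVec u) k) * hfact3
  -- KKT dual feasibility off the support
  have kkt2 : ∀ k : Fin (p - q), |G (e2 k)| ≤ lam := by
    intro k
    have hX2X1 : X2ᵀ * X1 = (n:ℝ) • C21 := by
      rw [hC21, smul_smul, mul_inv_cancel₀ hn0', one_smul]
    have hgval : G (e2 k) = 2 * ((n:ℝ) * (C21.mulVec u) k - Real.sqrt n * W2 k)
        + 2 * eta * ((Sig21.mulVec beta1) k + (Sig21.mulVec u) k) := by
      rw [hG]
      show 2 * (Xᵀ.mulVec (X.mulVec bh - y)) (e2 k) + 2 * eta * (Sig.mulVec bh) (e2 k) = _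
      rw [hXte2, hSigbh2, hres]
      have h1 : (X2ᵀ.mulVec (X1.mulVec u - eps)) k
          = (n:ℝ) * (C21.mulVec u) k - Real.sqrt n * W2 k := by
        rw [mulVec_sub, mulVec_mulVec, hX2X1, smul_mulVec, hX2eps]
        simp [Pi.sub_apply, Pi.smul_apply, smul_eq_mul]
      have h2 : (Sig21.mulVec bh1) k = (Sig21.mulVec beta1) k + (Sig21.mulVec u) k := by
        have : bh1 = beta1 + u := by funext m; rw [hbh1def]; rfl
        rw [this, mulVec_add]; rfl
      rw [h1, h2]
    -- CC21 u = M z with M = CC21 * CC11⁻¹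
    have hCC21u : (C21.mulVec u) k + (eta / n) * (Sig21.mulVec u) k
        = ((CC21 * CC11⁻¹).mulVec z) k := by
      have h00 : CC21.mulVec u = (CC21 * CC11⁻¹).mulVec z := by
        rw [hu, mulVec_mulVec]
      have h01 : CC21.mulVec u k = (C21.mulVec u) k + (eta / n) * (Sig21.mulVec u) k := by
        rw [hCC21, add_mulVec, smul_mulVec]
        simp only [Pi.add_apply, Pi.smul_apply, smul_eq_mul]
      rw [← h01]
      exact congrFun h00 k
    set M := CC21 * CC11⁻¹ with hM
    have hMz : (M.mulVec z) k = (Real.sqrt n)⁻¹ * (M.mulVec W1) k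
        - lam / (2 * n) * (M.mulVec s) k
        - eta / n * (M.mulVec (Sig11.mulVec beta1)) k := by
      rw [hz, mulVec_sub, mulVec_sub, mulVec_smul, mulVec_smul, mulVec_smul]
      simp [Pi.sub_apply, Pi.smul_apply, smul_eq_mul]
    set Dk : ℝ := (M.mulVec (s + (2 * eta / lam) • Sig11.mulVec beta1)
        - (2 * eta / lam) • Sig21.mulVec beta1) k with hDk
    have hDk2 : Dk = (M.mulVec s) k + (2 * eta / lam) * (M.mulVec (Sig11.mulVec beta1)) k
        - (2 * eta / lam) * (Sig21.mulVec beta1) k := by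
      rw [hDk, mulVec_add, mulVec_smul]
      simp [Pi.sub_apply, Pi.add_apply, Pi.smul_apply, smul_eq_mul]
    set Ak : ℝ := (M.mulVec W1) k - W2 k with hAk
    have hgval2 : G (e2 k) = 2 * Real.sqrt n * Ak - lam * Dk := by
      rw [hgval]
      have h5 : (C21.mulVec u) k = (M.mulVec z) k - (eta / n) * (Sig21.mulVec u) k := by
        have h0 := hCC21u
        try rw [← hM] at h0
        linarith
      rw [hDk2, hAk, h5, hMz]
      have hfact1 : (n:ℝ) * (Real.sqrt n)⁻¹ = Real.sqrt n := by
        field_simp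
        try linarith [hsq]
      have hfact2 : (n:ℝ) * (lam / (2 * n)) = lam / 2 := by
        field_simp
        try ring
      have hfact3 : (n:ℝ) * (eta / n) = eta := by
        field_simp
        try ring
      have hfact4 : lam * (2 * eta / lam) = 2 * eta := by
        field_simp
      linear_combination (2 * (M.mulVec W1) k) * hfact1 - (2 * (M.mulVec s) k) * hfact2
        - (2 * (M.mulVec (Sig11.mulVec beta1)) k) * hfact3
        - (2 * (Sig21.mulVec u) k) * hfact3
        + ((M.mulVec (Sig11.mulVec beta1)) k) * hfact4
        - ((Sig21.mulVec beta1) k) * hfact4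
    have hBk := hB k
    have hBk' : |Ak| ≤ lam / (2 * Real.sqrt n) - lam / (2 * Real.sqrt n) * |Dk| := by
      rw [hAk, hDk]
      exact hBk
    rw [hgval2]
    have htri : |2 * Real.sqrt n * Ak - lam * Dk|
        ≤ 2 * Real.sqrt n * |Ak| + lam * |Dk| := by
      have h8 := abs_sub (2 * Real.sqrt n * Ak) (lam * Dk)
      rw [abs_mul (2 * Real.sqrt n) Ak, abs_mul lam Dk,
        abs_of_pos (by positivity : (0:ℝ) < 2 * Real.sqrt n),
        abs_of_pos hlam] at h8
      exact h8
    have h9 := mul_le_mul_of_nonneg_left hBk'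
      (by positivity : (0:ℝ) ≤ 2 * Real.sqrt n)
    have h10 : 2 * Real.sqrt n * (lam / (2 * Real.sqrt n) - lam / (2 * Real.sqrt n) * |Dk|)
        = lam - lam * |Dk| := by
      field_simp
      try ring
    rw [h10] at h9
    linarith [htri, h9]
  -- expansion of F around bh
  have hexp : ∀ b : Fin p → ℝ,
      F b = F bh + (∑ j, (G j * (b j - bh j) + lam * (|b j| - |bh j|)))
        + (X.mulVec (b - bh)) ⬝ᵥ (X.mulVec (b - bh))
        + eta * ((b - bh) ⬝ᵥ Sig.mulVec (b - bh)) := by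
    intro b
    set d : Fin p → ℝ := b - bh with hd
    have hb : b = bh + d := by funext j; simp [hd]
    have hsq1 : (y - X.mulVec b) ⬝ᵥ (y - X.mulVec b)
        = (y - X.mulVec bh) ⬝ᵥ (y - X.mulVec bh)
          - 2 * ((y - X.mulVec bh) ⬝ᵥ X.mulVec d)
          + (X.mulVec d) ⬝ᵥ (X.mulVec d) := by
      rw [hb, mulVec_add]
      have : y - (X.mulVec bh + X.mulVec d) = (y - X.mulVec bh) - X.mulVec d := by
        funext i; simp [Pi.sub_apply, Pi.add_apply]; ring
      rw [this]
      simp only [dotProduct, Pi.sub_apply]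
      rw [Finset.mul_sum, ← Finset.sum_sub_distrib, ← Finset.sum_add_distrib]
      apply Finset.sum_congr rfl
      intro i _
      ring
    have hsq2 : b ⬝ᵥ Sig.mulVec b
        = bh ⬝ᵥ Sig.mulVec bh + 2 * (Sig.mulVec bh ⬝ᵥ d) + d ⬝ᵥ Sig.mulVec d := by
      rw [hb, mulVec_add, dotProduct_add, add_dotProduct, add_dotProduct]
      have hcross : d ⬝ᵥ Sig.mulVec bh = bh ⬝ᵥ Sig.mulVec d := hSymm d bh
      have hcomm : Sig.mulVec bh ⬝ᵥ d = d ⬝ᵥ Sig.mulVec bh := dotProduct_comm _ _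
      rw [hcomm, hcross]
      ring
    have hGd : ∑ j, G j * d j
        = 2 * ((X.mulVec bh - y) ⬝ᵥ X.mulVec d) + 2 * eta * (Sig.mulVec bh ⬝ᵥ d) := by
      have hadj : Xᵀ.mulVec (X.mulVec bh - y) ⬝ᵥ d = (X.mulVec bh - y) ⬝ᵥ X.mulVec d := by
        rw [mulVec_transpose, ← dotProduct_mulVec]
      rw [← hadj]
      simp only [hG, dotProduct]
      rw [Finset.mul_sum, Finset.mul_sum, ← Finset.sum_add_distrib]
      apply Finset.sum_congr rfl
      intro j _
      ring
    have hsub : (X.mulVec bh - y) ⬝ᵥ X.mulVec d = -((y - X.mulVec bh) ⬝ᵥ X.mulVec d) := by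
      rw [← neg_dotProduct]
      congr 1
      funext i
      simp [Pi.sub_apply, Pi.neg_apply]
    rw [hFdef]
    simp only
    rw [hsq1, hsq2]
    have hsum : ∑ j, (G j * (b j - bh j) + lam * (|b j| - |bh j|))
        = (∑ j, G j * d j) + lam * ((∑ j, |b j|) - (∑ j, |bh j|)) := by
      rw [Finset.sum_add_distrib]
      congr 1
      rw [mul_sub, Finset.mul_sum, Finset.mul_sum, ← Finset.sum_sub_distrib]
      exact Finset.sum_congr rfl (fun j _ => by ring)
    rw [hsum, hGd, hsub]
    ring
  -- bh is also a global minimizer of F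
  have hbhmin : ∀ b, F bh ≤ F b := by
    intro b
    rw [hexp b]
    have h1 : 0 ≤ ∑ j, (G j * (b j - bh j) + lam * (|b j| - |bh j|)) := by
      rw [hsplit (fun j => G j * (b j - bh j) + lam * (|b j| - |bh j|))]
      have ht1 : 0 ≤ ∑ k : Fin q,
          (G (e1 k) * (b (e1 k) - bh (e1 k)) + lam * (|b (e1 k)| - |bh (e1 k)|)) := by
        apply Finset.sum_nonneg
        intro k _
        rw [kkt1 k, hbhe1]
        have habs : |bh1 k| = s k * bh1 k := by
          simp only [hs]
          rw [← hsgnbh1 k, sgn_mul_self]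
        have hsb : s k * b (e1 k) ≤ |b (e1 k)| := by
          calc s k * b (e1 k) ≤ |s k * b (e1 k)| := le_abs_self _
            _ = |s k| * |b (e1 k)| := abs_mul _ _
            _ ≤ 1 * |b (e1 k)| := by
                apply mul_le_mul_of_nonneg_right (abs_sgn_le _) (abs_nonneg _)
            _ = |b (e1 k)| := one_mul _
        have : -(lam * s k) * (b (e1 k) - bh1 k) + lam * (|b (e1 k)| - |bh1 k|)
            = lam * (|b (e1 k)| - s k * b (e1 k)) := by
          rw [habs]; ring
        rw [this]
        apply mul_nonneg (le_of_lt hlam)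
        linarith
      have ht2 : 0 ≤ ∑ k : Fin (p - q),
          (G (e2 k) * (b (e2 k) - bh (e2 k)) + lam * (|b (e2 k)| - |bh (e2 k)|)) := by
        apply Finset.sum_nonneg
        intro k _
        rw [hbhe2]
        have h2 : G (e2 k) * (b (e2 k) - 0) ≥ -(lam * |b (e2 k)|) := by
          have h3 : G (e2 k) * b (e2 k) ≥ -|G (e2 k) * b (e2 k)| := neg_abs_le _
          have h4 : |G (e2 k) * b (e2 k)| = |G (e2 k)| * |b (e2 k)| := abs_mul _ _
          have h5 : |G (e2 k)| * |b (e2 k)| ≤ lam * |b (e2 k)| :=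
            mul_le_mul_of_nonneg_right (kkt2 k) (abs_nonneg _)
          rw [sub_zero]
          nlinarith
        have : |(0:ℝ)| = 0 := abs_zero
        rw [this]
        nlinarith
      linarith
    have h2 : 0 ≤ (X.mulVec (b - bh)) ⬝ᵥ (X.mulVec (b - bh)) := by
      simp only [dotProduct]
      exact Finset.sum_nonneg fun i _ => mul_self_nonneg _
    have h3 : 0 ≤ eta * ((b - bh) ⬝ᵥ Sig.mulVec (b - bh)) := by
      rcases eq_or_ne (b - bh) 0 with h | h
      · rw [h]; simp
      · have := hSig.dotProduct_mulVec_pos h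
        have h4 : 0 < (b - bh) ⬝ᵥ Sig.mulVec (b - bh) := by simpa using this
        positivity
    linarith
  -- uniqueness: a = bh by strict convexity
  have haeq : a = bh := by
    by_contra hne
    set m : Fin p → ℝ := fun j => (a j + bh j) / 2 with hm
    have hFab : F a = F bh := le_antisymm (hFa bh) (hbhmin a)
    have hXm : ∀ i, X.mulVec m i = (X.mulVec a i + X.mulVec bh i) / 2 := by
      intro i
      have : m = (1/2 : ℝ) • (a + bh) := by
        funext j; simp [hm, Pi.smul_apply, Pi.add_apply, smul_eq_mul]; ring
      rw [this, mulVec_smul, mulVec_add]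
      simp [Pi.smul_apply, Pi.add_apply, smul_eq_mul]
      ring
    have hRm : ∀ i, R.mulVec m i = (R.mulVec a i + R.mulVec bh i) / 2 := by
      intro i
      have : m = (1/2 : ℝ) • (a + bh) := by
        funext j; simp [hm, Pi.smul_apply, Pi.add_apply, smul_eq_mul]; ring
      rw [this, mulVec_smul, mulVec_add]
      simp [Pi.smul_apply, Pi.add_apply, smul_eq_mul]
      ring
    have hRne : R.mulVec a ≠ R.mulVec bh := by
      intro h
      apply hne
      have h2 := congrArg (fun w => R⁻¹.mulVec w) h
      simp only [mulVec_mulVec, hRinv2, one_mulVec] at h2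
      exact h2
    obtain ⟨i0, hi0⟩ : ∃ i, R.mulVec a i ≠ R.mulVec bh i := by
      by_contra h
      push_neg at h
      exact hRne (funext h)
    have havg : ∀ x y : ℝ, ((x + y)/2) * ((x + y)/2) ≤ (x * x + y * y)/2 := by
      intro x y; nlinarith [sq_nonneg (x - y)]
    have havgs : ∀ x y : ℝ, x ≠ y → ((x + y)/2) * ((x + y)/2) < (x * x + y * y)/2 := by
      intro x y hxy
      have h2 : x - y ≠ 0 := sub_ne_zero_of_ne hxy
      have h3 : 0 < |x - y| := abs_pos.mpr h2
      nlinarith [sq_abs (x - y), h3]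
    have hterm1 : (y - X.mulVec m) ⬝ᵥ (y - X.mulVec m)
        ≤ ((y - X.mulVec a) ⬝ᵥ (y - X.mulVec a)
          + (y - X.mulVec bh) ⬝ᵥ (y - X.mulVec bh)) / 2 := by
      simp only [dotProduct, Pi.sub_apply]
      calc ∑ i, (y i - X.mulVec m i) * (y i - X.mulVec m i)
          ≤ ∑ i, (((y i - X.mulVec a i) * (y i - X.mulVec a i)
            + (y i - X.mulVec bh i) * (y i - X.mulVec bh i)) / 2) := by
            apply Finset.sum_le_sum
            intro i _
            rw [hXm i]
            have := havg (y i - X.mulVec a i) (y i - X.mulVec bh i)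
            have heq : y i - (X.mulVec a i + X.mulVec bh i) / 2
                = ((y i - X.mulVec a i) + (y i - X.mulVec bh i)) / 2 := by ring
            rw [heq]
            exact this
        _ = _ := by rw [← Finset.sum_div, Finset.sum_add_distrib]
    have hterm2 : (∑ j, |m j|) ≤ ((∑ j, |a j|) + (∑ j, |bh j|)) / 2 := by
      calc (∑ j, |m j|) ≤ ∑ j, ((|a j| + |bh j|) / 2) := by
            apply Finset.sum_le_sum
            intro j _
            rw [hm]
            calc |(a j + bh j) / 2| = |a j + bh j| / 2 := by
                  rw [abs_div]; norm_num
              _ ≤ (|a j| + |bh j|) / 2 := by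
                  have := abs_add_le (a j) (bh j); linarith
        _ = _ := by rw [← Finset.sum_div, Finset.sum_add_distrib]
    have hterm3 : m ⬝ᵥ Sig.mulVec m
        < (a ⬝ᵥ Sig.mulVec a + bh ⬝ᵥ Sig.mulVec bh) / 2 := by
      rw [hquad m, hquad a, hquad bh]
      simp only [dotProduct]
      calc ∑ i, R.mulVec m i * R.mulVec m i
          < ∑ i, ((R.mulVec a i * R.mulVec a i + R.mulVec bh i * R.mulVec bh i) / 2) := by
            apply Finset.sum_lt_sum
            · intro i _
              rw [hRm i]
              exact havg _ _
            · exact ⟨i0, Finset.mem_univ i0, by rw [hRm i0]; exact havgs _ _ hi0⟩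
        _ = _ := by rw [← Finset.sum_div, Finset.sum_add_distrib]
    have hFm : F m < F a := by
      have hhalf : (F a + F bh) / 2 = F a := by rw [hFab]; ring
      rw [← hhalf]
      simp only [hFdef]
      have h2' : lam * (∑ j, |m j|) ≤ lam * (((∑ j, |a j|) + (∑ j, |bh j|)) / 2) :=
        mul_le_mul_of_nonneg_left hterm2 (le_of_lt hlam)
      have h3' : eta * (m ⬝ᵥ Sig.mulVec m)
          < eta * ((a ⬝ᵥ Sig.mulVec a + bh ⬝ᵥ Sig.mulVec bh) / 2) :=
        mul_lt_mul_of_pos_left hterm3 heta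
      linarith
    exact absurd (hFa m) (not_le.mpr hFm)
  -- conclusion
  intro j
  rw [← ha] at *
  rw [haeq]
  rcases lt_or_ge (j : ℕ) q with h | h
  · have hbj : bh j = bh1 ⟨(j : ℕ), h⟩ := by simp only [hbh]; exact dif_pos h
    have hbsj : betastar j = beta1 ⟨(j : ℕ), h⟩ := by
      rw [hbeta1q]
      exact rfl
    rw [hbj, hbsj]
    exact hsgnbh1 ⟨(j : ℕ), h⟩
  · have hbj : bh j = 0 := by simp only [hbh]; exact dif_neg (by omega)
    rw [hbj, hbeta2 j h]
end

section
/- Assume M₁ < β_min²/(9σ²), λ/n < 2β_min/(3M₂√q), and η/n < (1/(3M₂·λ_max(Σ₁₁)))·(β_min/‖β₁*‖₂). Then, setting κ = β_min²/(9M₁σ²) (so κ > 1), the probability that condition A fails satisfies: ℙ(A_nᶜ) ≤ q·exp(−(n/2)·(κ − √(2κ − 1))) + q·ℙ(λ_max(H_A H_Aᵀ) > M₁) + 2q·ℙ(λ_max(𝒞₁₁^{-1}) > M₂). -/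
open Matrix MeasureTheory ProbabilityTheory
open scoped ENNReal NNReal

/-- Euclidean norm -/
noncomputable def norm2 {m : ℕ} (v : Fin m → ℝ) : ℝ := Real.sqrt (norm2sq v)

/-- largest eigenvalue of a (symmetric) real matrix -/
noncomputable def lamMax {m : ℕ} (M : Matrix (Fin m) (Fin m) ℝ) : ℝ :=
  sSup {μ : ℝ | ∃ v : Fin m → ℝ, v ≠ 0 ∧ M.mulVec v = μ • v}

section AuxLemmas
open Real


lemma norm2sq_nonneg {m : ℕ} (v : Fin m → ℝ) : 0 ≤ norm2sq v :=
  Finset.sum_nonneg fun i _ => sq_nonneg _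

lemma norm2_nonneg {m : ℕ} (v : Fin m → ℝ) : 0 ≤ norm2 v := Real.sqrt_nonneg _

lemma norm2_sq {m : ℕ} (v : Fin m → ℝ) : norm2 v ^ 2 = norm2sq v := by
  rw [norm2, Real.sq_sqrt (norm2sq_nonneg v)]

lemma abs_coord_le_norm2 {m : ℕ} (v : Fin m → ℝ) (j : Fin m) : |v j| ≤ norm2 v := by
  rw [norm2, ← Real.sqrt_sq_eq_abs]
  apply Real.sqrt_le_sqrt
  exact Finset.single_le_sum (f := fun i => (v i)^2) (fun i _ => sq_nonneg _) (Finset.mem_univ j)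

lemma real_conjTranspose_eq_transpose {k l : ℕ} (A : Matrix (Fin k) (Fin l) ℝ) : Aᴴ = Aᵀ :=
  Matrix.conjTranspose_eq_transpose_of_trivial A

section herm
variable {m : ℕ} [NeZero m] {M : Matrix (Fin m) (Fin m) ℝ} (hM : M.IsHermitian)

lemma real_isHermitian_transpose_eq (hM : M.IsHermitian) : Mᵀ = M := by
  rw [← real_conjTranspose_eq_transpose]; exact hM

lemma eigenSet_eq :
    {μ : ℝ | ∃ v : Fin m → ℝ, v ≠ 0 ∧ M.mulVec v = μ • v} = Set.range hM.eigenvalues := by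
  ext μ'
  constructor
  · rintro ⟨v, hv0, hv⟩
    -- find i with (b i) ⬝ᵥ v ≠ 0
    set b := hM.eigenvectorBasis
    have hw : ∃ i, (⇑(b i)) ⬝ᵥ v ≠ 0 := by
      by_contra h
      push_neg at h
      apply hv0
      have hinner : ∀ i, b.repr ((WithLp.equiv 2 _).symm v) i = 0 := by
        intro i
        rw [OrthonormalBasis.repr_apply_apply]
        have : (inner ℝ (b i) ((WithLp.equiv 2 (Fin m → ℝ)).symm v) : ℝ)
            = (⇑(b i)) ⬝ᵥ v := by
          simp [PiLp.inner_apply, dotProduct, RCLike.inner_apply, mul_comm]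
        rw [this, h i]
      have : (WithLp.equiv 2 (Fin m → ℝ)).symm v = 0 := by
        apply b.repr.injective
        ext i
        simpa using hinner i
      simpa using congrArg (WithLp.equiv 2 (Fin m → ℝ)) this
    obtain ⟨i, hi⟩ := hw
    refine ⟨i, ?_⟩
    have h1 : (⇑(b i)) ⬝ᵥ (M.mulVec v) = μ' * ((⇑(b i)) ⬝ᵥ v) := by
      rw [hv, dotProduct_smul]; rfl
    have h2 : (⇑(b i)) ⬝ᵥ (M.mulVec v) = hM.eigenvalues i * ((⇑(b i)) ⬝ᵥ v) := by
      rw [dotProduct_mulVec, ← Matrix.mulVec_transpose, real_isHermitian_transpose_eq hM,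
        hM.mulVec_eigenvectorBasis i, smul_dotProduct]
      rfl
    have := h1.symm.trans h2
    have := mul_right_cancel₀ hi this
    exact this.symm
  · rintro ⟨i, rfl⟩
    refine ⟨⇑(hM.eigenvectorBasis i), ?_, hM.mulVec_eigenvectorBasis i⟩
    intro h
    have := hM.eigenvectorBasis.orthonormal.ne_zero i
    apply this
    ext k
    exact congrFun h k

end herm


section herm
variable {m : ℕ} [NeZero m] {M : Matrix (Fin m) (Fin m) ℝ}

lemma eigen_le_lamMax (hM : M.IsHermitian) (i : Fin m) : hM.eigenvalues i ≤ lamMax M := by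
  rw [lamMax, eigenSet_eq hM]
  exact le_csSup (Set.finite_range _).bddAbove ⟨i, rfl⟩

lemma lamMax_mem (hM : M.IsHermitian) : ∃ i, lamMax M = hM.eigenvalues i := by
  have h := (Set.range_nonempty hM.eigenvalues).csSup_mem (Set.finite_range _)
  rw [lamMax, eigenSet_eq hM]
  obtain ⟨i, hi⟩ := h
  exact ⟨i, hi.symm⟩

lemma lamMax_nonneg (hM : M.PosSemidef) : 0 ≤ lamMax M := by
  obtain ⟨i, hi⟩ := lamMax_mem hM.1
  rw [hi]; exact hM.eigenvalues_nonneg i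

lemma lamMax_pos (hM : M.PosDef) : 0 < lamMax M := by
  obtain ⟨i, hi⟩ := lamMax_mem hM.1
  rw [hi]; exact hM.eigenvalues_pos i

lemma dot_mulVec_unitary (U : Matrix (Fin m) (Fin m) ℝ) (hU : Uᵀ * U = 1)
    (x y : Fin m → ℝ) : (U *ᵥ x) ⬝ᵥ (U *ᵥ y) = x ⬝ᵥ y := by
  rw [dotProduct_mulVec, ← Matrix.mulVec_transpose, Matrix.mulVec_mulVec, hU, Matrix.one_mulVec]

lemma norm2sq_mulVec_le (hM : M.PosSemidef) (v : Fin m → ℝ) :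
    norm2sq (M *ᵥ v) ≤ (lamMax M)^2 * norm2sq v := by
  have hherm := hM.1
  set U := (hherm.eigenvectorUnitary : Matrix (Fin m) (Fin m) ℝ) with hUdef
  have hU1 : star U * U = 1 := Matrix.mem_unitaryGroup_iff'.mp hherm.eigenvectorUnitary.2
  have hU2 : U * star U = 1 := Matrix.mem_unitaryGroup_iff.mp hherm.eigenvectorUnitary.2
  have hstar : star U = Uᵀ := by
    rw [Matrix.star_eq_conjTranspose, Matrix.conjTranspose_eq_transpose_of_trivial]
  have hUt : Uᵀ * U = 1 := by rw [← hstar]; exact hU1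
  have hUt' : (Uᵀ)ᵀ * Uᵀ = 1 := by rw [Matrix.transpose_transpose, ← hstar]; exact hU2
  have hspec : M = U * Matrix.diagonal hherm.eigenvalues * Uᵀ := by
    have h := hherm.spectral_theorem
    rw [Unitary.conjStarAlgAut_apply, ← hUdef, hstar] at h
    convert h using 3 <;> rfl
  set z := Uᵀ *ᵥ v with hz
  have hMv : M *ᵥ v = U *ᵥ (Matrix.diagonal hherm.eigenvalues *ᵥ z) := by
    conv_lhs => rw [hspec]
    rw [← Matrix.mulVec_mulVec, ← Matrix.mulVec_mulVec]
  have hd : ∀ (w : Fin m → ℝ), norm2sq w = w ⬝ᵥ w := by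
    intro w; simp [norm2sq, dotProduct, sq]
  have hzv : norm2sq z = norm2sq v := by
    rw [hd, hd, hz, dot_mulVec_unitary Uᵀ hUt' v v]
  have hdiag : Matrix.diagonal hherm.eigenvalues *ᵥ z = fun i => hherm.eigenvalues i * z i := by
    ext i; simp [Matrix.mulVec_diagonal]
  calc norm2sq (M *ᵥ v) = norm2sq (Matrix.diagonal hherm.eigenvalues *ᵥ z) := by
        rw [hMv, hd, hd, dot_mulVec_unitary U hUt]
    _ ≤ (lamMax M)^2 * norm2sq z := by
        rw [hdiag, norm2sq, norm2sq, Finset.mul_sum]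
        apply Finset.sum_le_sum
        intro i _
        rw [mul_pow]
        exact mul_le_mul_of_nonneg_right
          (pow_le_pow_left₀ (hM.eigenvalues_nonneg i) (eigen_le_lamMax hherm i) 2) (sq_nonneg _)
    _ = (lamMax M)^2 * norm2sq v := by rw [hzv]

end herm


section more
variable {m : ℕ} [NeZero m] {M : Matrix (Fin m) (Fin m) ℝ}

lemma norm2_mulVec_le (hM : M.PosSemidef) (v : Fin m → ℝ) :
    norm2 (M *ᵥ v) ≤ lamMax M * norm2 v := by
  rw [norm2, norm2]
  calc Real.sqrt (norm2sq (M *ᵥ v)) ≤ Real.sqrt ((lamMax M)^2 * norm2sq v) :=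
        Real.sqrt_le_sqrt (norm2sq_mulVec_le hM v)
    _ = lamMax M * Real.sqrt (norm2sq v) := by
        rw [Real.sqrt_mul (sq_nonneg _), Real.sqrt_sq (lamMax_nonneg hM)]

lemma abs_mulVec_le (hM : M.PosSemidef) (v : Fin m → ℝ) (j : Fin m) :
    |(M *ᵥ v) j| ≤ lamMax M * norm2 v :=
  (abs_coord_le_norm2 _ j).trans (norm2_mulVec_le hM v)

lemma norm2_single (j : Fin m) : norm2 (Pi.single j 1 : Fin m → ℝ) = 1 := by
  have : norm2sq (Pi.single j 1 : Fin m → ℝ) = 1 := by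
    rw [norm2sq]
    rw [Finset.sum_eq_single j]
    · simp
    · intro k _ hk; simp [Pi.single_apply, hk]
    · simp
  rw [norm2, this, Real.sqrt_one]

lemma diag_le_lamMax (hM : M.PosSemidef) (j : Fin m) : M j j ≤ lamMax M := by
  have h1 : M j j = (M *ᵥ (Pi.single j 1)) j := by
    simp [Matrix.mulVec_single]
  rw [h1]
  calc (M *ᵥ (Pi.single j 1)) j ≤ |(M *ᵥ (Pi.single j 1)) j| := le_abs_self _
    _ ≤ lamMax M * norm2 (Pi.single j 1) := abs_mulVec_le hM _ j
    _ = lamMax M := by rw [norm2_single, mul_one]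

end more

-- Cauchy-Schwarz for dotProduct
lemma dotProduct_le_norm2 {m : ℕ} (x y : Fin m → ℝ) : |x ⬝ᵥ y| ≤ norm2 x * norm2 y := by
  have h := Finset.sum_mul_sq_le_sq_mul_sq Finset.univ x y
  rw [← Real.sqrt_sq_eq_abs, norm2, norm2,
    ← Real.sqrt_mul (norm2sq_nonneg x)]
  exact Real.sqrt_le_sqrt h

-- smul posdef
lemma posDef_smul {m : ℕ} {M : Matrix (Fin m) (Fin m) ℝ} (hM : M.PosDef) {c : ℝ} (hc : 0 < c) :
    (c • M).PosDef := by
  refine Matrix.PosDef.of_dotProduct_mulVec_pos ?_ ?_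
  · rw [Matrix.IsHermitian, Matrix.conjTranspose_smul]
    rw [show star c = c from rfl, hM.1.eq]
  · intro x hx
    rw [Matrix.smul_mulVec, dotProduct_smul]
    exact mul_pos hc (hM.dotProduct_mulVec_pos hx)

lemma posSemidef_smul {m : ℕ} {M : Matrix (Fin m) (Fin m) ℝ} (hM : M.PosSemidef) {c : ℝ}
    (hc : 0 ≤ c) : (c • M).PosSemidef := by
  refine Matrix.PosSemidef.of_dotProduct_mulVec_nonneg ?_ ?_
  · rw [Matrix.IsHermitian, Matrix.conjTranspose_smul]
    rw [show star c = c from rfl, hM.1.eq]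
  · intro x
    rw [Matrix.smul_mulVec, dotProduct_smul]
    exact mul_nonneg hc (hM.dotProduct_mulVec_nonneg x)

-- posdef submatrix along injective map
lemma posDef_submatrix {q p : ℕ} {S : Matrix (Fin p) (Fin p) ℝ} (hS : S.PosDef)
    (e : Fin q → Fin p) (he : Function.Injective e) : (S.submatrix e e).PosDef := by
  refine Matrix.PosDef.of_dotProduct_mulVec_pos ?_ ?_
  · show (S.submatrix e e)ᴴ = S.submatrix e e
    rw [Matrix.conjTranspose_submatrix, hS.1.eq]
  · intro x hx
    set B : Matrix (Fin p) (Fin q) ℝ := (1 : Matrix (Fin p) (Fin p) ℝ).submatrix id e with hB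
    have hsub : S.submatrix e e = Bᵀ * S * B := by
      rw [hB]
      rw [show S.submatrix e e = (1 * S * 1).submatrix e e by rw [one_mul, mul_one],
        Matrix.submatrix_mul _ _ e id e Function.bijective_id,
        Matrix.submatrix_mul _ _ e id id Function.bijective_id, Matrix.submatrix_id_id]
      congr 2
      ext i j
      simp [Matrix.transpose_apply, Matrix.one_apply, eq_comm]
    have hBx : B *ᵥ x ≠ 0 := by
      obtain ⟨i, hi⟩ := Function.ne_iff.mp hx
      intro h
      apply hi
      have : (B *ᵥ x) (e i) = x i := by
        rw [hB]
        simp only [Matrix.mulVec, dotProduct, Matrix.submatrix_apply, id_eq, Matrix.one_apply,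
          he.eq_iff, ite_mul, one_mul, zero_mul]
        rw [Finset.sum_ite_eq]
        simp
      rw [← this, h, Pi.zero_apply, Pi.zero_apply]
    have key : x ⬝ᵥ ((S.submatrix e e) *ᵥ x) = (B *ᵥ x) ⬝ᵥ (S *ᵥ (B *ᵥ x)) := by
      rw [hsub, ← Matrix.mulVec_mulVec, ← Matrix.mulVec_mulVec,
        Matrix.dotProduct_mulVec x Bᵀ, Matrix.vecMul_transpose]
    have hpos := hS.dotProduct_mulVec_pos hBx
    show 0 < star x ⬝ᵥ ((S.submatrix e e) *ᵥ x)
    rw [show (star x : Fin q → ℝ) = x from rfl, key]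
    rw [show (star (B *ᵥ x) : Fin p → ℝ) = B *ᵥ x from rfl] at hpos
    exact hpos



lemma log_le_half_sub_half_inv {s : ℝ} (hs : 1 ≤ s) : Real.log s ≤ (s - s⁻¹) / 2 := by
  have key : MonotoneOn (fun x : ℝ => (x - x⁻¹) / 2 - Real.log x) (Set.Ici 1) := by
    apply monotoneOn_of_deriv_nonneg (convex_Ici 1)
    · apply ContinuousOn.sub
      · exact (continuousOn_id.sub (continuousOn_inv₀.mono (by
          intro x hx; simp only [Set.mem_Ici] at hx
          exact ne_of_gt (lt_of_lt_of_le one_pos hx)))).div_const 2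
      · exact Real.continuousOn_log.mono (by
          intro x hx; simp only [Set.mem_Ici] at hx
          exact ne_of_gt (lt_of_lt_of_le one_pos hx))
    · intro x hx
      rw [interior_Ici] at hx
      have hx0 : (0:ℝ) < x := lt_trans one_pos hx
      have h1 : HasDerivAt (fun x : ℝ => (x - x⁻¹) / 2 - Real.log x)
          ((1 - -(x^2)⁻¹) / 2 - x⁻¹) x := by
        exact (((hasDerivAt_id x).sub (hasDerivAt_inv hx0.ne')).div_const 2).sub
          (Real.hasDerivAt_log hx0.ne')
      exact h1.differentiableAt.differentiableWithinAt
    · intro x hx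
      rw [interior_Ici] at hx
      have hx0 : (0:ℝ) < x := lt_trans one_pos hx
      have h1 : HasDerivAt (fun x : ℝ => (x - x⁻¹) / 2 - Real.log x)
          ((1 - -(x^2)⁻¹) / 2 - x⁻¹) x :=
        (((hasDerivAt_id x).sub (hasDerivAt_inv hx0.ne')).div_const 2).sub
          (Real.hasDerivAt_log hx0.ne')
      rw [h1.deriv]
      have : (1 - -(x^2)⁻¹) / 2 - x⁻¹ = (1 - x⁻¹)^2 / 2 := by
        field_simp
        ring
      rw [this]
      positivity
  have h0 := key (Set.mem_Ici.mpr le_rfl) (Set.mem_Ici.mpr hs) hs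
  simp only [Real.log_one, inv_one, sub_self, zero_div, zero_sub, neg_nonpos] at h0
  -- h0 : (1-1)/2 - log 1 ≤ (s - s⁻¹)/2 - log s
  linarith [h0]


lemma gaussianPDF_smul_eq {σ t : ℝ} (hσ : 0 < σ) (x : ℝ) :
    (Real.toNNReal (gaussianPDFReal 0 ⟨σ^2, sq_nonneg σ⟩ x) : ℝ≥0)
        • Real.exp (t * x^2)
      = (Real.sqrt (2 * π * σ^2))⁻¹ * Real.exp (-(1/(2*σ^2) - t) * x^2) := by
  simp only [NNReal.smul_def, smul_eq_mul,
    Real.coe_toNNReal _ (gaussianPDFReal_nonneg _ _ x)]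
  rw [gaussianPDFReal_def (μ := 0) (v := ⟨σ^2, sq_nonneg σ⟩)]
  change (Real.toNNReal ((Real.sqrt (2 * π * σ^2))⁻¹ * Real.exp (-(x - 0) ^ 2 / (2 * σ^2))) : ℝ) * Real.exp (t * x ^ 2)
      = (Real.sqrt (2 * π * σ^2))⁻¹ * Real.exp (-(1/(2*σ^2) - t) * x^2)
  rw [Real.coe_toNNReal _ (by positivity)]
  rw [mul_assoc, ← Real.exp_add]
  congr 1
  have hσ2 : σ^2 ≠ 0 := (pow_pos hσ 2).ne'
  field_simp
  ring

lemma gaussian_sq_exp_integrable {σ t : ℝ} (hσ : 0 < σ) (ht : 2 * t * σ^2 < 1) :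
    Integrable (fun x => Real.exp (t * x ^ 2)) (gaussianReal 0 ⟨σ^2, sq_nonneg σ⟩) := by
  have hv : @Ne ℝ≥0 ⟨σ^2, sq_nonneg σ⟩ 0 := by
    intro h
    exact (pow_pos hσ 2).ne' (congrArg NNReal.toReal h)
  rw [gaussianReal_of_var_ne_zero 0 hv]
  have hb : (0:ℝ) < 1/(2*σ^2) - t := by
    rw [sub_pos, lt_div_iff₀ (by positivity)]
    linarith [ht]
  rw [gaussianPDF_def (μ := 0) (v := ⟨σ^2, sq_nonneg σ⟩)]
  have : (fun x => ENNReal.ofReal (gaussianPDFReal 0 ⟨σ^2, sq_nonneg σ⟩ x))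
      = fun x => ((Real.toNNReal (gaussianPDFReal 0 ⟨σ^2, sq_nonneg σ⟩ x) : ℝ≥0) : ℝ≥0∞) := rfl
  rw [this, integrable_withDensity_iff_integrable_coe_smul]
  · refine ((integrable_exp_neg_mul_sq hb).const_mul
      ((Real.sqrt (2 * π * σ^2))⁻¹)).congr ?_
    filter_upwards with x
    exact (gaussianPDF_smul_eq hσ x).symm
  · exact (measurable_gaussianPDFReal 0 _).real_toNNReal

lemma gaussian_sq_exp_integral {σ t : ℝ} (hσ : 0 < σ) (ht : 2 * t * σ^2 < 1) :
    ∫ x, Real.exp (t * x ^ 2) ∂(gaussianReal 0 ⟨σ^2, sq_nonneg σ⟩)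
      = (Real.sqrt (1 - 2*t*σ^2))⁻¹ := by
  have hv : @Ne ℝ≥0 ⟨σ^2, sq_nonneg σ⟩ 0 := by
    intro h
    exact (pow_pos hσ 2).ne' (congrArg NNReal.toReal h)
  have hb : (0:ℝ) < 1/(2*σ^2) - t := by
    rw [sub_pos, lt_div_iff₀ (by positivity)]
    linarith [ht]
  rw [gaussianReal_of_var_ne_zero 0 hv, gaussianPDF_def (μ := 0) (v := ⟨σ^2, sq_nonneg σ⟩)]
  have hrw : (fun x => ENNReal.ofReal (gaussianPDFReal 0 ⟨σ^2, sq_nonneg σ⟩ x))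
      = fun x => ((Real.toNNReal (gaussianPDFReal 0 ⟨σ^2, sq_nonneg σ⟩ x) : ℝ≥0) : ℝ≥0∞) := rfl
  rw [hrw, integral_withDensity_eq_integral_smul ((measurable_gaussianPDFReal 0 ⟨σ^2, sq_nonneg σ⟩).real_toNNReal)]
  rw [funext (gaussianPDF_smul_eq hσ (t := t)), integral_const_mul, integral_gaussian]
  rw [← Real.sqrt_inv, ← Real.sqrt_mul (by positivity), ← Real.sqrt_inv]
  congr 1
  have h1 : (0:ℝ) < 1 - 2*t*σ^2 := by linarith
  have hσ2 : σ^2 ≠ 0 := (pow_pos hσ 2).ne'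
  have hπ : π ≠ 0 := Real.pi_ne_zero
  have hden : π * σ^2 * 2 - π*σ^4*t*4 ≠ 0 := by
    have heq : π * σ^2 * 2 - π*σ^4*t*4 = 2*π*σ^2*(1-2*t*σ^2) := by ring
    rw [heq]
    positivity
  field_simp


lemma chisq_tail {Ω : Type*} [MeasureSpace Ω] [IsProbabilityMeasure (ℙ : Measure Ω)]
    {n : ℕ} (hn : 1 ≤ n) (eps : Ω → Fin n → ℝ) (heps_meas : Measurable eps)
    (heps_indep : iIndepFun (fun i ω => eps ω i) ℙ)
    {σ : ℝ} (hσ : 0 < σ)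
    (heps_gauss : ∀ i : Fin n,
      Measure.map (fun ω => eps ω i) ℙ = gaussianReal 0 ⟨σ ^ 2, sq_nonneg σ⟩)
    {κ : ℝ} (hκ : 1 < κ) :
    (ℙ {ω | (n:ℝ) * κ * σ^2 ≤ ∑ i, eps ω i ^ 2}).toReal
      ≤ Real.exp (-(n / 2 : ℝ) * (κ - Real.sqrt (2 * κ - 1))) := by
  set s := Real.sqrt (2 * κ - 1) with hsdef
  have h2κ : (1:ℝ) < 2 * κ - 1 := by linarith
  have hs1 : 1 < s := by
    have := Real.sqrt_lt_sqrt zero_le_one h2κ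
    rwa [Real.sqrt_one] at this
  have hs0 : 0 < s := lt_trans one_pos hs1
  have hss : s * s = 2 * κ - 1 := Real.mul_self_sqrt (by linarith)
  set t := (1 - s⁻¹) / (2 * σ^2) with htdef
  have ht0 : 0 ≤ t := by
    apply div_nonneg _ (by positivity)
    have : s⁻¹ < 1 := inv_lt_one_of_one_lt₀ hs1
    linarith
  have hteq : 2 * t * σ^2 = 1 - s⁻¹ := by
    rw [htdef]
    field_simp
  have ht1 : 2 * t * σ^2 < 1 := by
    rw [hteq]
    have : 0 < s⁻¹ := inv_pos.mpr hs0
    linarith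
  -- the individual squared variables
  set Y : Fin n → Ω → ℝ := fun i ω => eps ω i ^ 2 with hYdef
  have hYmeas : ∀ i, Measurable (Y i) := fun i =>
    ((measurable_pi_apply i).comp heps_meas).pow_const 2
  have hYindep : iIndepFun Y ℙ :=
    heps_indep.comp (fun _ x => x ^ 2) (fun _ => measurable_id.pow_const 2)
  have hYint : ∀ i, Integrable (fun ω => Real.exp (t * Y i ω)) ℙ := by
    intro i
    have hg : AEStronglyMeasurable (fun x : ℝ => Real.exp (t * x^2))
        (Measure.map (fun ω => eps ω i) ℙ) :=
      (measurable_const.mul (measurable_id.pow_const 2)).exp.aestronglyMeasurable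
    have hf : AEMeasurable (fun ω => eps ω i) ℙ :=
      ((measurable_pi_apply i).comp heps_meas).aemeasurable
    have := (integrable_map_measure hg hf).mp (by
      rw [heps_gauss i]
      exact gaussian_sq_exp_integrable hσ ht1)
    exact this
  have hmgf : ∀ i : Fin n, mgf (Y i) ℙ t = (Real.sqrt (1 - 2*t*σ^2))⁻¹ := by
    intro i
    rw [mgf]
    have hf : AEMeasurable (fun ω => eps ω i) ℙ :=
      ((measurable_pi_apply i).comp heps_meas).aemeasurable
    have hg : AEStronglyMeasurable (fun x : ℝ => Real.exp (t * x^2))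
        (Measure.map (fun ω => eps ω i) ℙ) :=
      (measurable_const.mul (measurable_id.pow_const 2)).exp.aestronglyMeasurable
    have := MeasureTheory.integral_map hf hg (f := fun x : ℝ => Real.exp (t * x^2))
    rw [heps_gauss i] at this
    rw [← gaussian_sq_exp_integral hσ ht1, ← this]
  -- Chernoff
  have hint_sum := hYindep.integrable_exp_mul_sum hYmeas
    (s := Finset.univ) (fun i _ => hYint i)
  have hcher := measure_ge_le_exp_mul_mgf (X := ∑ i : Fin n, Y i) (μ := ℙ)
    ((n:ℝ) * κ * σ^2) ht0 hint_sum
  rw [hYindep.mgf_sum hYmeas Finset.univ] at hcher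
  have hprod : ∏ i : Fin n, mgf (Y i) ℙ t = ((Real.sqrt (1 - 2*t*σ^2))⁻¹)^n := by
    rw [Finset.prod_congr rfl (fun i _ => hmgf i), Finset.prod_const, Finset.card_univ,
      Fintype.card_fin]
  rw [hprod] at hcher
  have hseteq : {ω | (n:ℝ) * κ * σ^2 ≤ ∑ i, eps ω i ^ 2}
      = {ω | (n:ℝ) * κ * σ^2 ≤ (∑ i : Fin n, Y i) ω} := by
    ext ω
    simp [Finset.sum_apply, hYdef]
  rw [hseteq]
  refine hcher.trans ?_
  -- now pure analysis
  have hinner : 1 - 2*t*σ^2 = s⁻¹ := by rw [hteq]; ring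
  have hpow : ((Real.sqrt (1 - 2*t*σ^2))⁻¹)^n = Real.exp ((n:ℝ) * (Real.log s / 2)) := by
    rw [hinner, Real.sqrt_inv, inv_inv, ← Real.log_sqrt hs0.le, Real.exp_nat_mul,
      Real.exp_log (Real.sqrt_pos.mpr hs0)]
  rw [hpow, ← Real.exp_add, Real.exp_le_exp]
  -- -t * (n κ σ²) + n log s / 2 ≤ -(n/2)(κ - s)
  have hlog : Real.log s ≤ (s - s⁻¹)/2 := log_le_half_sub_half_inv hs1.le
  have htσ : t * σ^2 = (1 - s⁻¹)/2 := by
    rw [htdef]; field_simp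
  have hsinv : s * s⁻¹ = 1 := mul_inv_cancel₀ hs0.ne'
  have hc : -(κ * (t * σ^2)) + Real.log s / 2 ≤ -((κ - s)/2) := by
    rw [htσ]
    nlinarith [hlog, hss, hsinv, hs0]
  have hn0 : (0:ℝ) ≤ n := Nat.cast_nonneg n
  calc -t * ((n:ℝ) * κ * σ^2) + (n:ℝ) * (Real.log s / 2)
      = (n:ℝ) * (-(κ * (t * σ^2)) + Real.log s / 2) := by ring
    _ ≤ (n:ℝ) * (-((κ - s)/2)) := mul_le_mul_of_nonneg_left hc hn0
    _ = -((n:ℝ) / 2) * (κ - s) := by ring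

end AuxLemmas

/-- Bound on the probability that condition A fails:
    ℙ(A_nᶜ) ≤ q·exp(−(n/2)(κ − √(2κ−1))) + q·ℙ(λ_max(H_A H_Aᵀ) > M₁)
      + 2q·ℙ(λ_max(𝒞₁₁⁻¹) > M₂). -/
theorem stmt13 (n p q : ℕ) (hn : 1 ≤ n) (hq : 1 ≤ q) (hqp : q ≤ p)
    (Ω : Type*) [MeasureSpace Ω] [IsProbabilityMeasure (ℙ : Measure Ω)]
    (sigma : ℝ) (hsigma : 0 < sigma)
    (lam eta M1 M2 : ℝ) (hlam : 0 < lam) (heta : 0 < eta) (hM1 : 0 < M1) (hM2 : 0 < M2)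
    (Sig : Matrix (Fin p) (Fin p) ℝ) (hSig : Sig.PosDef)
    (Sig11 : Matrix (Fin q) (Fin q) ℝ)
    (hSig11 : Sig11 = Sig.submatrix (Fin.castLE hqp) (Fin.castLE hqp))
    -- X is a random (measurable) n×p matrix
    (X : Ω → Matrix (Fin n) (Fin p) ℝ) (hX_meas : Measurable fun ω => fun i j => X ω i j)
    -- ε has i.i.d. centered Gaussian coordinates with variance σ²
    (eps : Ω → Fin n → ℝ) (heps_meas : Measurable eps)
    (heps_indep : iIndepFun (fun i ω => eps ω i) ℙ)
    (heps_gauss : ∀ i : Fin n,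
      Measure.map (fun ω => eps ω i) ℙ = gaussianReal 0 ⟨sigma ^ 2, sq_nonneg sigma⟩)
    -- the linear model y = Xβ* + ε
    (betastar : Fin p → ℝ)
    (hbeta1 : ∀ j : Fin p, (j : ℕ) < q → betastar j ≠ 0)
    (hbeta2 : ∀ j : Fin p, q ≤ (j : ℕ) → betastar j = 0)
    (y : Ω → Fin n → ℝ) (hy : ∀ ω, y ω = (X ω).mulVec betastar + eps ω)
    (beta1 : Fin q → ℝ) (hbeta1q : beta1 = fun j => betastar (Fin.castLE hqp j))
    (betamin : ℝ) (hbetamin : IsLeast {x : ℝ | ∃ j : Fin q, x = |beta1 j|} betamin)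
    -- blocks and derived quantities
    (X1 : Ω → Matrix (Fin n) (Fin q) ℝ)
    (hX1 : ∀ ω, X1 ω = (X ω).submatrix id (Fin.castLE hqp))
    (C11 : Ω → Matrix (Fin q) (Fin q) ℝ)
    (hC11 : ∀ ω, C11 ω = ((n : ℝ)⁻¹) • ((X1 ω)ᵀ * X1 ω))
    (W1 : Ω → Fin q → ℝ) (hW1 : ∀ ω, W1 ω = ((Real.sqrt n)⁻¹) • (X1 ω)ᵀ.mulVec (eps ω))
    (CC11 : Ω → Matrix (Fin q) (Fin q) ℝ)
    (hCC11 : ∀ ω, CC11 ω = C11 ω + (eta / n) • Sig11)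
    (HA : Ω → Matrix (Fin q) (Fin n) ℝ)
    (hHA : ∀ ω, HA ω = ((Real.sqrt n)⁻¹) • ((CC11 ω)⁻¹ * (X1 ω)ᵀ))
    -- the event A_n
    (An : Set Ω)
    (hAn : An = {ω | ∀ j : Fin q,
      |(CC11 ω)⁻¹.mulVec (W1 ω) j| < Real.sqrt n *
        (|beta1 j| - (lam / (2 * n)) * |((CC11 ω)⁻¹.mulVec fun k => sgn (beta1 k)) j|
          - (eta / n) * |(CC11 ω)⁻¹.mulVec (Sig11.mulVec beta1) j|)})
    -- assumptions on the constants
    (hM1lt : M1 < betamin ^ 2 / (9 * sigma ^ 2))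
    (hlamn : lam / n < 2 * betamin / (3 * M2 * Real.sqrt q))
    (hetan : eta / n < (1 / (3 * M2 * lamMax Sig11)) * (betamin / norm2 beta1))
    (kappa : ℝ) (hkappa : kappa = betamin ^ 2 / (9 * M1 * sigma ^ 2)) :
    ℙ Anᶜ
      ≤ ENNReal.ofReal
          ((q : ℝ) * Real.exp (-(n / 2 : ℝ) * (kappa - Real.sqrt (2 * kappa - 1))))
        + (q : ℝ≥0∞) * ℙ {ω | M1 < lamMax (HA ω * (HA ω)ᵀ)}
        + (2 * q : ℝ≥0∞) * ℙ {ω | M2 < lamMax ((CC11 ω)⁻¹)} := by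
  haveI : NeZero q := ⟨by omega⟩
  have hn0 : (0:ℝ) < n := by exact_mod_cast Nat.lt_of_lt_of_le Nat.zero_lt_one hn
  have hsqn : (0:ℝ) < Real.sqrt n := Real.sqrt_pos.mpr hn0
  have hbm : 0 < betamin := by
    obtain ⟨⟨j0, hj0⟩, _⟩ := hbetamin
    rw [hj0]
    apply abs_pos.mpr
    rw [hbeta1q]
    exact hbeta1 _ (by simpa using j0.2)
  have hκ : 1 < kappa := by
    rw [hkappa, lt_div_iff₀ (by positivity)]
    rw [lt_div_iff₀ (by positivity)] at hM1lt
    nlinarith [hM1lt]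
  set B := {ω | (n:ℝ) * kappa * sigma^2 ≤ ∑ i, eps ω i ^ 2} with hBdef
  set E2 := {ω | M1 < lamMax (HA ω * (HA ω)ᵀ)} with hE2def
  set E3 := {ω | M2 < lamMax ((CC11 ω)⁻¹)} with hE3def
  have hct : ∀ {a b : ℕ} (A : Matrix (Fin a) (Fin b) ℝ), Aᴴ = Aᵀ := fun A =>
    Matrix.conjTranspose_eq_transpose_of_trivial A
  -- the inclusion
  have hsub : Anᶜ ⊆ B ∪ E2 ∪ E3 := by
    intro ω hω
    by_contra hc
    simp only [Set.mem_union, not_or] at hc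
    obtain ⟨⟨hB, hE2⟩, hE3⟩ := hc
    apply hω
    rw [hAn]
    intro j
    -- matrix facts
    have hC11psd : (C11 ω).PosSemidef := by
      rw [hC11]
      have h1 := Matrix.posSemidef_conjTranspose_mul_self (X1 ω)
      rw [hct] at h1
      exact posSemidef_smul h1 (inv_nonneg.mpr hn0.le)
    have hSig11pd : Sig11.PosDef := by
      rw [hSig11]
      exact posDef_submatrix hSig _ (Fin.castLE_injective hqp)
    have hCCpd : (CC11 ω).PosDef := by
      rw [hCC11]
      exact Matrix.PosDef.posSemidef_add hC11psd (posDef_smul hSig11pd (by positivity))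
    have hNpd : ((CC11 ω)⁻¹).PosDef := hCCpd.inv
    have hNpsd := hNpd.posSemidef
    have hlamN : lamMax ((CC11 ω)⁻¹) ≤ M2 := not_lt.mp hE3
    have hHApsd : (HA ω * (HA ω)ᵀ).PosSemidef := by
      have h1 := Matrix.posSemidef_self_mul_conjTranspose (HA ω)
      rwa [hct] at h1
    have hlamH : lamMax (HA ω * (HA ω)ᵀ) ≤ M1 := not_lt.mp hE2
    have hsum : ∑ i, eps ω i ^ 2 < (n:ℝ) * kappa * sigma^2 := not_le.mp hB
    have hsum0 : (0:ℝ) ≤ ∑ i, eps ω i ^ 2 := Finset.sum_nonneg fun i _ => sq_nonneg _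
    -- LHS identification
    have hLHS : (CC11 ω)⁻¹.mulVec (W1 ω) = (HA ω) *ᵥ (eps ω) := by
      rw [hW1, hHA, Matrix.mulVec_smul, Matrix.smul_mulVec, ← Matrix.mulVec_mulVec]
    -- LHS bound
    have hLA : |((HA ω) *ᵥ (eps ω)) j| < Real.sqrt n * betamin / 3 := by
      have hcs : (((HA ω) *ᵥ (eps ω)) j)^2
          ≤ (HA ω * (HA ω)ᵀ) j j * (∑ i, eps ω i ^ 2) := by
        have h1 : ((HA ω) *ᵥ (eps ω)) j = ∑ i, HA ω j i * eps ω i := rfl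
        have h2 : (HA ω * (HA ω)ᵀ) j j = ∑ i, HA ω j i ^ 2 := by
          rw [Matrix.mul_apply]
          exact Finset.sum_congr rfl fun i _ => by rw [Matrix.transpose_apply, sq]
        rw [h1, h2]
        exact Finset.sum_mul_sq_le_sq_mul_sq Finset.univ _ _
      have hd : (HA ω * (HA ω)ᵀ) j j ≤ M1 := (diag_le_lamMax hHApsd j).trans hlamH
      have h3 : (((HA ω) *ᵥ (eps ω)) j)^2 < M1 * ((n:ℝ) * kappa * sigma^2) := by
        calc (((HA ω) *ᵥ (eps ω)) j)^2 ≤ (HA ω * (HA ω)ᵀ) j j * (∑ i, eps ω i ^ 2) := hcs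
          _ ≤ M1 * (∑ i, eps ω i ^ 2) := mul_le_mul_of_nonneg_right hd hsum0
          _ < M1 * ((n:ℝ) * kappa * sigma^2) := by
              exact mul_lt_mul_of_pos_left hsum hM1
      have hkey : M1 * ((n:ℝ) * kappa * sigma^2) = (Real.sqrt n * betamin / 3)^2 := by
        rw [hkappa]
        rw [div_pow, mul_pow, Real.sq_sqrt hn0.le]
        field_simp
        ring
      rw [hkey] at h3
      have habs : |((HA ω) *ᵥ (eps ω)) j| ^ 2 < (Real.sqrt n * betamin / 3)^2 := by
        rwa [sq_abs]
      exact lt_of_pow_lt_pow_left₀ 2 (by positivity) habs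
    -- sign vector bound
    have hsgn : norm2 (fun k => sgn (beta1 k)) = Real.sqrt q := by
      have hone : ∀ k : Fin q, (sgn (beta1 k))^2 = 1 := by
        intro k
        have hk : beta1 k ≠ 0 := by
          rw [hbeta1q]
          exact hbeta1 _ (by simpa using k.2)
        rcases lt_trichotomy (beta1 k) 0 with h | h | h
        · rw [sgn, if_neg (by linarith), if_pos h]; norm_num
        · exact absurd h hk
        · rw [sgn, if_pos h]; norm_num
      have : norm2sq (fun k => sgn (beta1 k)) = q := by
        rw [norm2sq]
        rw [Finset.sum_congr rfl (fun k _ => hone k), Finset.sum_const, Finset.card_univ,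
          Fintype.card_fin, nsmul_eq_mul, mul_one]
      rw [norm2, this]
    have hsq : (0:ℝ) < Real.sqrt q := Real.sqrt_pos.mpr (by exact_mod_cast Nat.lt_of_lt_of_le Nat.zero_lt_one hq)
    have ha : |((CC11 ω)⁻¹.mulVec fun k => sgn (beta1 k)) j| ≤ M2 * Real.sqrt q := by
      refine (abs_mulVec_le hNpsd _ j).trans ?_
      rw [hsgn]
      exact mul_le_mul_of_nonneg_right hlamN (Real.sqrt_nonneg _)
    have han : (lam / (2 * n)) * |((CC11 ω)⁻¹.mulVec fun k => sgn (beta1 k)) j|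
        < betamin / 3 := by
      have h1 : (lam / (2 * n)) * |((CC11 ω)⁻¹.mulVec fun k => sgn (beta1 k)) j|
          ≤ (lam / (2 * n)) * (M2 * Real.sqrt q) :=
        mul_le_mul_of_nonneg_left ha (by positivity)
      have h2 : lam / n * (M2 * Real.sqrt q) < 2 * betamin / (3 * M2 * Real.sqrt q)
          * (M2 * Real.sqrt q) := mul_lt_mul_of_pos_right hlamn (by positivity)
      have h3 : 2 * betamin / (3 * M2 * Real.sqrt q) * (M2 * Real.sqrt q)
          = 2 * betamin / 3 := by
        field_simp
      rw [h3] at h2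
      have h4 : lam / (2 * n) * (M2 * Real.sqrt q) = (lam / n * (M2 * Real.sqrt q)) / 2 := by
        field_simp
      linarith
    -- Sig11 beta1 bound
    have hnb : 0 < norm2 beta1 := by
      apply Real.sqrt_pos.mpr
      have hj : beta1 j ≠ 0 := by
        rw [hbeta1q]
        exact hbeta1 _ (by simpa using j.2)
      have h1 : (beta1 j)^2 ≤ norm2sq beta1 :=
        Finset.single_le_sum (f := fun k => (beta1 k)^2) (fun k _ => sq_nonneg _)
          (Finset.mem_univ j)
      have h2 : 0 < (beta1 j)^2 := by positivity
      linarith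
    have hL : 0 < lamMax Sig11 := lamMax_pos hSig11pd
    have hb2 : |((CC11 ω)⁻¹.mulVec (Sig11.mulVec beta1)) j|
        ≤ M2 * (lamMax Sig11 * norm2 beta1) := by
      refine (abs_mulVec_le hNpsd _ j).trans ?_
      calc lamMax ((CC11 ω)⁻¹) * norm2 (Sig11 *ᵥ beta1)
          ≤ M2 * norm2 (Sig11 *ᵥ beta1) :=
            mul_le_mul_of_nonneg_right hlamN (norm2_nonneg _)
        _ ≤ M2 * (lamMax Sig11 * norm2 beta1) :=
            mul_le_mul_of_nonneg_left (norm2_mulVec_le hSig11pd.posSemidef beta1) hM2.le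
    have hbn : (eta / n) * |((CC11 ω)⁻¹.mulVec (Sig11.mulVec beta1)) j| < betamin / 3 := by
      have h1 : (eta / n) * |((CC11 ω)⁻¹.mulVec (Sig11.mulVec beta1)) j|
          ≤ (eta / n) * (M2 * (lamMax Sig11 * norm2 beta1)) :=
        mul_le_mul_of_nonneg_left hb2 (by positivity)
      have h2 : (eta / n) * (M2 * (lamMax Sig11 * norm2 beta1))
          < (1 / (3 * M2 * lamMax Sig11)) * (betamin / norm2 beta1)
            * (M2 * (lamMax Sig11 * norm2 beta1)) :=
        mul_lt_mul_of_pos_right hetan (by positivity)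
      have h3 : (1 / (3 * M2 * lamMax Sig11)) * (betamin / norm2 beta1)
          * (M2 * (lamMax Sig11 * norm2 beta1)) = betamin / 3 := by
        field_simp
      rw [h3] at h2
      linarith
    -- combine
    have hβj : betamin ≤ |beta1 j| := hbetamin.2 ⟨j, rfl⟩
    rw [hLHS]
    calc |((HA ω) *ᵥ (eps ω)) j| < Real.sqrt n * betamin / 3 := hLA
      _ = Real.sqrt n * (betamin / 3) := by ring
      _ < Real.sqrt n * (|beta1 j|
            - (lam / (2 * n)) * |((CC11 ω)⁻¹.mulVec fun k => sgn (beta1 k)) j|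
            - (eta / n) * |((CC11 ω)⁻¹.mulVec (Sig11.mulVec beta1)) j|) := by
          apply mul_lt_mul_of_pos_left _ hsqn
          linarith
  -- measure bounds
  have hBbound : ℙ B ≤ ENNReal.ofReal
      ((q : ℝ) * Real.exp (-(n / 2 : ℝ) * (kappa - Real.sqrt (2 * kappa - 1)))) := by
    have h1 := chisq_tail hn eps heps_meas heps_indep hsigma heps_gauss hκ
    have h2 : ℙ B = ENNReal.ofReal ((ℙ B).toReal) := (ENNReal.ofReal_toReal (measure_ne_top _ _)).symm
    rw [h2]
    apply ENNReal.ofReal_le_ofReal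
    refine h1.trans ?_
    have : (1:ℝ) ≤ q := by exact_mod_cast hq
    nlinarith [Real.exp_pos (-(n / 2 : ℝ) * (kappa - Real.sqrt (2 * kappa - 1)))]
  have hE2bound : ℙ E2 ≤ (q : ℝ≥0∞) * ℙ E2 := by
    apply le_mul_of_one_le_left zero_le
    exact_mod_cast Nat.one_le_cast.mpr hq
  have hE3bound : ℙ E3 ≤ (2 * q : ℝ≥0∞) * ℙ E3 := by
    apply le_mul_of_one_le_left zero_le
    calc (1:ℝ≥0∞) ≤ (q : ℝ≥0∞) := by exact_mod_cast Nat.one_le_cast.mpr hq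
      _ ≤ 2 * q := le_mul_of_one_le_left zero_le one_le_two
  calc ℙ Anᶜ ≤ ℙ (B ∪ E2 ∪ E3) := measure_mono hsub
    _ ≤ ℙ (B ∪ E2) + ℙ E3 := measure_union_le _ _
    _ ≤ ℙ B + ℙ E2 + ℙ E3 := add_le_add (measure_union_le _ _) le_rfl
    _ ≤ ENNReal.ofReal ((q : ℝ) * Real.exp (-(n / 2 : ℝ) * (kappa - Real.sqrt (2 * kappa - 1))))
        + (q : ℝ≥0∞) * ℙ E2 + (2 * q : ℝ≥0∞) * ℙ E3 :=
      add_le_add (add_le_add hBbound hE2bound) hE3bound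
end
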